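/- Let X = G(U) with U ∼ Uniform[0,1] and G(u) = -log(1-u)/λ the quantile of Exp(λ). Then E[1/(nX)] = (1/n)∫₀¹ λ/(-log(1-u)) du = +∞, i.e., for comonotonic exponential channels the expected inverse of the sum diverges. Consequently, the worst-case zero-outage capacity with perfect CSIT is zero. -/
import Mathlib


open Set MeasureTheory

lemma inv_lintegral_top : ∫⁻ u in Ioo (0 : ℝ) (1/2), ENNReal.ofReal u⁻¹ = ⊤ := by
  by_contra h
  have hmeas : MeasurableSet (Ioo (0:ℝ) (1/2)) := measurableSet_Ioo
  have hint : IntegrableOn (fun u : ℝ => u⁻¹) (Ioo (0:ℝ) (1/2)) := by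
    refine ⟨(measurable_inv.aestronglyMeasurable).restrict, ?_⟩
    rw [hasFiniteIntegral_iff_norm]
    have : ∀ᵐ u ∂(volume.restrict (Ioo (0:ℝ) (1/2))),
        ENNReal.ofReal ‖u⁻¹‖ = ENNReal.ofReal u⁻¹ := by
      filter_upwards [ae_restrict_mem hmeas] with u hu
      rw [Real.norm_eq_abs, abs_of_pos (inv_pos.mpr hu.1)]
    rw [lintegral_congr_ae this]
    exact lt_top_iff_ne_top.mpr h
  have : IntegrableOn (fun u : ℝ => u ^ (-1 : ℝ)) (Ioo (0:ℝ) (1/2)) := by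
    apply hint.congr_fun ?_ hmeas
    intro u hu
    simp [Real.rpow_neg_one]
  rw [intervalIntegral.integrableOn_Ioo_rpow_iff (by norm_num : (0:ℝ) < 1/2)] at this
  linarith

theorem comonotonic_csit_zero (n : ℕ) (hn : 1 ≤ n) (l ρ : ℝ) (hl : 0 < l) (hρ : 0 < ρ) :
    (∫⁻ u in Ioo (0 : ℝ) 1,
        ENNReal.ofReal ((n * (-Real.log (1 - u) / l))⁻¹) = ⊤) ∧
      (if (∫⁻ u in Ioo (0 : ℝ) 1,
            ENNReal.ofReal ((n * (-Real.log (1 - u) / l))⁻¹)) = ⊤ then (0 : ℝ)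
        else Real.logb 2 (1 + ρ *
          ((∫⁻ u in Ioo (0 : ℝ) 1,
            ENNReal.ofReal ((n * (-Real.log (1 - u) / l))⁻¹)).toReal)⁻¹)) = 0 := by
  have hn' : (0:ℝ) < n := by exact_mod_cast hn
  have key : ∫⁻ u in Ioo (0 : ℝ) 1,
      ENNReal.ofReal ((n * (-Real.log (1 - u) / l))⁻¹) = ⊤ := by
    rw [eq_top_iff]
    calc (⊤ : ENNReal) = ENNReal.ofReal (l / (2 * n)) * ∫⁻ u in Ioo (0 : ℝ) (1/2),
            ENNReal.ofReal u⁻¹ := by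
          rw [inv_lintegral_top, ENNReal.mul_top]
          simp only [ne_eq, ENNReal.ofReal_eq_zero, not_le]
          positivity
      _ = ∫⁻ u in Ioo (0 : ℝ) (1/2),
            ENNReal.ofReal (l / (2 * n)) * ENNReal.ofReal u⁻¹ := by
          rw [lintegral_const_mul' _ _ ENNReal.ofReal_ne_top]
      _ ≤ ∫⁻ u in Ioo (0 : ℝ) (1/2),
            ENNReal.ofReal ((n * (-Real.log (1 - u) / l))⁻¹) := by
          apply setLIntegral_mono' measurableSet_Ioo
          intro u hu
          rw [← ENNReal.ofReal_mul (by positivity)]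
          apply ENNReal.ofReal_le_ofReal
          have hu0 : 0 < u := hu.1
          have hu2 : u < 1/2 := hu.2
          have h1u : (0:ℝ) < 1 - u := by linarith
          have hlog_pos : 0 < -Real.log (1 - u) :=
            neg_pos.mpr (Real.log_neg h1u (by linarith))
          have hlog_le : -Real.log (1 - u) ≤ 2 * u := by
            have h0 := Real.log_le_sub_one_of_pos (inv_pos.mpr h1u)
            rw [Real.log_inv] at h0
            have h3 : 1 / (1 - u) ≤ 1 + 2 * u := (div_le_iff₀ h1u).mpr (by nlinarith)
            rw [one_div] at h3
            linarith
          have e1 : l / (2 * ↑n) * u⁻¹ = (2 * ↑n * u / l)⁻¹ := by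
            field_simp
          rw [e1]
          have hA : 0 < ↑n * (-Real.log (1 - u) / l) :=
            mul_pos hn' (div_pos hlog_pos hl)
          apply inv_anti₀ hA
          have e2 : ↑n * (-Real.log (1 - u) / l) = ↑n * -Real.log (1 - u) / l := by
            ring
          have e3 : 2 * ↑n * u / l = ↑n * (2 * u) / l := by ring
          rw [e2, e3]
          gcongr
      _ ≤ _ := lintegral_mono_set (Ioo_subset_Ioo le_rfl (by norm_num))
  exact ⟨key, by rw [if_pos key]⟩
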